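/- Let C₁ : ℝ → ℝ₊ be nondecreasing and convex. Let T > 0, 0 < Δ < T/2, r > 0, ε > 0, and let p, h : [0,T] → ℝ be (integrable) functions such that |∫₀ᵗ h(s) ds| ≤ ε for all t ∈ [0,T] and |p(t)| + |h(t)| ≤ r for all t ∈ [0,T]. Then ∫₀ᵀ C₁(p(t)+h(t)) dt ≥ ∫₀ᵀ C₁(p(t)) dt − γ₁T − γ₂T − γ₃, where γ₁ = w̄_{[−r,r]}(C₁, 2ε/Δ), γ₂ = w̄_{[−r,r]}(C₁, w̄_T(p,Δ)), γ₃ = 2C₁(r)Δ. -/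

import Mathlib

/-- Modulus of continuity of `f` over `[a,b]` at scale `δ`. -/
noncomputable def modContOn (f : ℝ → ℝ) (a b δ : ℝ) : ℝ :=
  sSup {y | ∃ s t, s ∈ Set.Icc a b ∧ t ∈ Set.Icc a b ∧ |s - t| ≤ δ ∧ y = |f s - f t|}

open MeasureTheory Set intervalIntegral
set_option maxHeartbeats 1000000

lemma le_modContOn {f : ℝ → ℝ} {a b δ : ℝ} {B : ℝ}
    (hB : ∀ s ∈ Set.Icc a b, ∀ t ∈ Set.Icc a b, |f s - f t| ≤ B)
    {s t : ℝ} (hs : s ∈ Set.Icc a b) (ht : t ∈ Set.Icc a b) (hst : |s - t| ≤ δ) :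
    |f s - f t| ≤ modContOn f a b δ := by
  apply le_csSup
  · refine ⟨B, ?_⟩
    rintro y ⟨u, v, hu, hv, -, rfl⟩
    exact hB u hu v hv
  · exact ⟨s, t, hs, ht, hst, rfl⟩

lemma modContOn_nonneg {f : ℝ → ℝ} {a b δ : ℝ} {B : ℝ}
    (hB : ∀ s ∈ Set.Icc a b, ∀ t ∈ Set.Icc a b, |f s - f t| ≤ B)
    (hab : a ≤ b) (hδ : 0 ≤ δ) : 0 ≤ modContOn f a b δ := by
  have h := le_modContOn hB (Set.left_mem_Icc.2 hab) (Set.left_mem_Icc.2 hab)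
    (by simpa using hδ)
  exact le_trans (abs_nonneg _) h

/-- Key per-interval estimate. -/
lemma key_interval (C₁ : ℝ → ℝ) (hC₁pos : ∀ x, 0 ≤ C₁ x) (hC₁mono : Monotone C₁)
    (hC₁conv : ConvexOn ℝ Set.univ C₁)
    (T Δ r ε : ℝ) (hT : 0 < T) (hΔ : 0 < Δ) (hr : 0 < r) (hε : 0 < ε)
    (p h : ℝ → ℝ)
    (hpint : IntervalIntegrable p volume 0 T)
    (hhint : IntervalIntegrable h volume 0 T)
    (hCphint : IntervalIntegrable (fun t => C₁ (p t + h t)) volume 0 T)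
    (hCpint : IntervalIntegrable (fun t => C₁ (p t)) volume 0 T)
    (hhbd : ∀ t ∈ Set.Icc (0:ℝ) T, |∫ s in (0:ℝ)..t, h s| ≤ ε)
    (hbd : ∀ t ∈ Set.Icc (0:ℝ) T, |p t| + |h t| ≤ r)
    (a b : ℝ) (ha : 0 ≤ a) (hab : b = a + Δ) (hbT : b ≤ T) :
    (∫ t in Set.Ioc a b, C₁ (p t)) ≤ (∫ t in Set.Ioc a b, C₁ (p t + h t))
      + (modContOn C₁ (-r) r (2 * ε / Δ) + modContOn C₁ (-r) r (modContOn p 0 T Δ)) * Δ := by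
  have haleb : a ≤ b := by linarith
  have hb0 : 0 ≤ b := by linarith
  have haT : a ≤ T := by linarith
  have hIoc : Set.Ioc a b ⊆ Set.Ioc (0:ℝ) T := Set.Ioc_subset_Ioc ha hbT
  have hIcc : Set.Ioc a b ⊆ Set.Icc (0:ℝ) T := fun x hx =>
    ⟨le_trans ha hx.1.le, le_trans hx.2 hbT⟩
  -- measure facts
  have hvol : volume (Set.Ioc a b) = ENNReal.ofReal Δ := by
    rw [Real.volume_Ioc, hab]; ring_nf
  have h0 : volume (Set.Ioc a b) ≠ 0 := by
    rw [hvol]; simp [ENNReal.ofReal_eq_zero]; linarith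
  have htop : volume (Set.Ioc a b) ≠ ⊤ := by rw [hvol]; exact ENNReal.ofReal_ne_top
  have hvolR : (volume (Set.Ioc a b)).toReal = Δ := by
    rw [hvol, ENNReal.toReal_ofReal hΔ.le]
  -- integrabilities
  have hp1 : IntegrableOn p (Set.Ioc a b) volume := hpint.1.mono_set hIoc
  have hh1 : IntegrableOn h (Set.Ioc a b) volume := hhint.1.mono_set hIoc
  have hph1 : IntegrableOn (fun x => p x + h x) (Set.Ioc a b) volume := hp1.add hh1
  have hCph1 : IntegrableOn (fun x => C₁ (p x + h x)) (Set.Ioc a b) volume :=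
    hCphint.1.mono_set hIoc
  have hCp1 : IntegrableOn (fun x => C₁ (p x)) (Set.Ioc a b) volume :=
    hCpint.1.mono_set hIoc
  -- membership
  have hpmem : ∀ x ∈ Set.Ioc a b, p x ∈ Set.Icc (-r) r := by
    intro x hx
    have := hbd x (hIcc hx)
    exact abs_le.1 (by have := abs_nonneg (h x); linarith [this])
  have hphmem : ∀ x ∈ Set.Ioc a b, p x + h x ∈ Set.Icc (-r) r := by
    intro x hx
    have h1 := hbd x (hIcc hx)
    exact abs_le.1 (le_trans (abs_add_le _ _) h1)
  set P := ⨍ x in Set.Ioc a b, p x with hPdef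
  set M := ⨍ x in Set.Ioc a b, (p x + h x) with hMdef
  have hP : P ∈ Set.Icc (-r) r :=
    (convex_Icc _ _).set_average_mem isClosed_Icc h0 htop
      (ae_restrict_of_forall_mem measurableSet_Ioc hpmem) hp1
  have hM : M ∈ Set.Icc (-r) r :=
    (convex_Icc _ _).set_average_mem isClosed_Icc h0 htop
      (ae_restrict_of_forall_mem measurableSet_Ioc hphmem) hph1
  -- bound on |M - P|
  have hhsub : ∀ u ∈ Set.Icc (0:ℝ) T, IntervalIntegrable h volume 0 u := by
    intro u hu
    apply hhint.mono_set
    rw [Set.uIcc_of_le hT.le, Set.uIcc_of_le hu.1]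
    exact Set.Icc_subset_Icc le_rfl hu.2
  have hinth : |∫ x in Set.Ioc a b, h x| ≤ 2 * ε := by
    have heq : ∫ x in Set.Ioc a b, h x = (∫ x in (0:ℝ)..b, h x) - ∫ x in (0:ℝ)..a, h x := by
      rw [← intervalIntegral.integral_of_le haleb]
      rw [intervalIntegral.integral_interval_sub_left (hhsub b ⟨hb0, hbT⟩) (hhsub a ⟨ha, haT⟩)]
    rw [heq]
    have h1 := hhbd b ⟨hb0, hbT⟩
    have h2 := hhbd a ⟨ha, haT⟩
    calc |(∫ x in (0:ℝ)..b, h x) - ∫ x in (0:ℝ)..a, h x|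
        ≤ |∫ x in (0:ℝ)..b, h x| + |∫ x in (0:ℝ)..a, h x| := abs_sub _ _
      _ ≤ 2 * ε := by linarith
  have hMP : |M - P| ≤ 2 * ε / Δ := by
    have hMeq : M = P + Δ⁻¹ * ∫ x in Set.Ioc a b, h x := by
      rw [hMdef, hPdef, setAverage_eq, setAverage_eq, measureReal_def, hvolR,
        integral_add hp1 hh1, smul_eq_mul, smul_eq_mul]
      ring
    rw [hMeq]
    have : |Δ⁻¹ * ∫ x in Set.Ioc a b, h x| ≤ Δ⁻¹ * (2 * ε) := by
      rw [abs_mul, abs_of_nonneg (inv_nonneg.2 hΔ.le)]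
      exact mul_le_mul_of_nonneg_left hinth (inv_nonneg.2 hΔ.le)
    calc |P + Δ⁻¹ * (∫ x in Set.Ioc a b, h x) - P| = |Δ⁻¹ * ∫ x in Set.Ioc a b, h x| := by
          ring_nf
      _ ≤ Δ⁻¹ * (2 * ε) := this
      _ = 2 * ε / Δ := by ring
  -- bound function for modContOn of C₁ on [-r,r]
  have hBC : ∀ s ∈ Set.Icc (-r) r, ∀ t ∈ Set.Icc (-r) r, |C₁ s - C₁ t| ≤ C₁ r := by
    intro s hs t ht
    rw [abs_sub_le_iff]
    constructor
    · linarith [hC₁mono hs.2, hC₁pos t]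
    · linarith [hC₁mono ht.2, hC₁pos s]
  have hBp : ∀ s ∈ Set.Icc (0:ℝ) T, ∀ t ∈ Set.Icc (0:ℝ) T, |p s - p t| ≤ 2 * r := by
    intro s hs t ht
    have h1 := hbd s hs; have h2 := hbd t ht
    have := abs_sub (p s) (p t)
    have hhs := abs_nonneg (h s); have hht := abs_nonneg (h t)
    linarith
  -- γ₁ step
  have hγ1 : C₁ P - C₁ M ≤ modContOn C₁ (-r) r (2 * ε / Δ) := by
    have := le_modContOn (δ := 2 * ε / Δ) hBC hP hM (by rwa [abs_sub_comm] at hMP)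
    exact le_trans (le_abs_self _) this
  -- Jensen
  have hjensen : C₁ M ≤ ⨍ x in Set.Ioc a b, C₁ (p x + h x) := by
    exact hC₁conv.map_set_average_le (hC₁conv.continuousOn isOpen_univ) isClosed_univ h0 htop
      (Filter.Eventually.of_forall fun x => Set.mem_univ _) hph1 hCph1
  have hjensen' : Δ * C₁ M ≤ ∫ x in Set.Ioc a b, C₁ (p x + h x) := by
    have := hjensen
    rw [setAverage_eq, measureReal_def, hvolR, smul_eq_mul] at this
    have h2 := mul_le_mul_of_nonneg_left this hΔ.le
    rw [← mul_assoc, mul_inv_cancel₀ hΔ.ne', one_mul] at h2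
    exact h2
  -- pointwise step for γ₂
  set w := modContOn p 0 T Δ with hwdef
  set γ₂ := modContOn C₁ (-r) r w with hγ₂def
  have hpt : ∀ t ∈ Set.Ioc a b, C₁ (p t) ≤ C₁ P + γ₂ := by
    intro t hto
    have htT : t ∈ Set.Icc (0:ℝ) T := hIcc hto
    have hmemw : ∀ x ∈ Set.Ioc a b, p x ∈ Set.Icc (p t - w) (p t + w) := by
      intro x hx
      have hdist : |t - x| ≤ Δ := by
        have h1 := hto.1; have h2 := hto.2; have h3 := hx.1; have h4 := hx.2
        rw [abs_sub_le_iff]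
        constructor <;> linarith
      have hw := le_modContOn (δ := Δ) hBp htT (hIcc hx) hdist
      rw [abs_sub_le_iff] at hw
      exact ⟨by linarith [hw.1, hw.2], by linarith [hw.1, hw.2]⟩
    have hPmem : P ∈ Set.Icc (p t - w) (p t + w) :=
      (convex_Icc _ _).set_average_mem isClosed_Icc h0 htop
        (ae_restrict_of_forall_mem measurableSet_Ioc hmemw) hp1
    have hdiff : |p t - P| ≤ w := by
      rw [abs_sub_le_iff]; exact ⟨by linarith [hPmem.1], by linarith [hPmem.2]⟩
    have hptr : p t ∈ Set.Icc (-r) r := by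
      have := hbd t htT
      exact abs_le.1 (by have := abs_nonneg (h t); linarith)
    have := le_modContOn (δ := w) hBC hptr hP hdiff
    have h3 := le_trans (le_abs_self _) this
    linarith
  -- integrate pointwise bound
  have hint2 : (∫ t in Set.Ioc a b, C₁ (p t)) ≤ Δ * (C₁ P + γ₂) := by
    have hconst : IntegrableOn (fun _ : ℝ => C₁ P + γ₂) (Set.Ioc a b) volume := by
      refine integrableOn_const ?_
      rw [hvol]; exact ENNReal.ofReal_ne_top
    have := setIntegral_mono_on hCp1 hconst measurableSet_Ioc hpt
    rwa [setIntegral_const, measureReal_def, hvolR, smul_eq_mul] at this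
  have hfinal : Δ * (C₁ P + γ₂) ≤ (∫ t in Set.Ioc a b, C₁ (p t + h t))
      + (modContOn C₁ (-r) r (2 * ε / Δ) + γ₂) * Δ := by
    nlinarith [hjensen', hγ1, hΔ.le]
  linarith

theorem stmt1 (C₁ : ℝ → ℝ) (hC₁pos : ∀ x, 0 ≤ C₁ x) (hC₁mono : Monotone C₁)
    (hC₁conv : ConvexOn ℝ Set.univ C₁)
    (T Δ r ε : ℝ) (hT : 0 < T) (hΔ : 0 < Δ) (hΔT : Δ < T / 2) (hr : 0 < r) (hε : 0 < ε)
    (p h : ℝ → ℝ)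
    (hpint : IntervalIntegrable p MeasureTheory.volume 0 T)
    (hhint : IntervalIntegrable h MeasureTheory.volume 0 T)
    (hCphint : IntervalIntegrable (fun t => C₁ (p t + h t)) MeasureTheory.volume 0 T)
    (hCpint : IntervalIntegrable (fun t => C₁ (p t)) MeasureTheory.volume 0 T)
    (hhbd : ∀ t ∈ Set.Icc (0:ℝ) T, |∫ s in (0:ℝ)..t, h s| ≤ ε)
    (hbd : ∀ t ∈ Set.Icc (0:ℝ) T, |p t| + |h t| ≤ r) :
    (∫ t in (0:ℝ)..T, C₁ (p t + h t)) ≥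
      (∫ t in (0:ℝ)..T, C₁ (p t))
        - modContOn C₁ (-r) r (2 * ε / Δ) * T
        - modContOn C₁ (-r) r (modContOn p 0 T Δ) * T
        - 2 * C₁ r * Δ := by
  set γ₁ := modContOn C₁ (-r) r (2 * ε / Δ) with hγ₁def
  set γ₂ := modContOn C₁ (-r) r (modContOn p 0 T Δ) with hγ₂def
  have hBC : ∀ s ∈ Set.Icc (-r) r, ∀ t ∈ Set.Icc (-r) r, |C₁ s - C₁ t| ≤ C₁ r := by
    intro s hs t ht
    rw [abs_sub_le_iff]
    constructor
    · linarith [hC₁mono hs.2, hC₁pos t]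
    · linarith [hC₁mono ht.2, hC₁pos s]
  have hBp : ∀ s ∈ Set.Icc (0:ℝ) T, ∀ t ∈ Set.Icc (0:ℝ) T, |p s - p t| ≤ 2 * r := by
    intro s hs t ht
    have h1 := hbd s hs; have h2 := hbd t ht
    have h3 := abs_sub (p s) (p t)
    have hhs := abs_nonneg (h s); have hht := abs_nonneg (h t)
    linarith
  have hγ₁0 : 0 ≤ γ₁ := modContOn_nonneg hBC (by linarith) (by positivity)
  have hw0 : 0 ≤ modContOn p 0 T Δ := modContOn_nonneg hBp hT.le hΔ.le
  have hγ₂0 : 0 ≤ γ₂ := modContOn_nonneg hBC (by linarith) hw0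
  have hC₁r0 : 0 ≤ C₁ r := hC₁pos r
  set N := ⌊T / Δ⌋₊ with hNdef
  have hNle : (N : ℝ) * Δ ≤ T := by
    have h1 : (N : ℝ) ≤ T / Δ := Nat.floor_le (by positivity)
    have h2 := mul_le_mul_of_nonneg_right h1 hΔ.le
    rwa [div_mul_cancel₀ _ hΔ.ne'] at h2
  have hTlt : T < ((N : ℝ) + 1) * Δ := by
    have h1 : T / Δ < (N : ℝ) + 1 := Nat.lt_floor_add_one (T / Δ)
    nlinarith [(div_lt_iff₀ hΔ).1 h1]
  have h0N : (0:ℝ) ≤ (N : ℝ) * Δ := by positivity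
  -- restriction of interval integrability
  have hsubint : ∀ (u v : ℝ), 0 ≤ u → u ≤ T → 0 ≤ v → v ≤ T →
      ∀ f : ℝ → ℝ, IntervalIntegrable f volume 0 T → IntervalIntegrable f volume u v := by
    intro u v hu huT hv hvT f hf
    apply hf.mono_set
    rw [Set.uIcc_of_le hT.le]
    exact Set.uIcc_subset_Icc ⟨hu, huT⟩ ⟨hv, hvT⟩
  -- per-interval bound
  have hk : ∀ k : ℕ, k < N →
      (∫ x in ((k:ℝ)*Δ)..(((k:ℝ)+1)*Δ), C₁ (p x)) ≤
        (∫ x in ((k:ℝ)*Δ)..(((k:ℝ)+1)*Δ), C₁ (p x + h x)) + (γ₁ + γ₂) * Δ := by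
    intro k hkN
    have hk1 : (k : ℝ) + 1 ≤ (N : ℝ) := by exact_mod_cast Nat.succ_le_of_lt hkN
    have hle1 : (0:ℝ) ≤ (k:ℝ)*Δ := by positivity
    have hle2 : ((k:ℝ)+1)*Δ ≤ T := by nlinarith
    have hstep : (k:ℝ)*Δ ≤ ((k:ℝ)+1)*Δ := by nlinarith
    have := key_interval C₁ hC₁pos hC₁mono hC₁conv T Δ r ε hT hΔ hr hε p h
      hpint hhint hCphint hCpint hhbd hbd ((k:ℝ)*Δ) (((k:ℝ)+1)*Δ) hle1 (by ring) hle2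
    rw [intervalIntegral.integral_of_le hstep, intervalIntegral.integral_of_le hstep]
    exact this
  -- sums over adjacent intervals
  set a : ℕ → ℝ := fun k => (k : ℝ) * Δ with hadef
  have hintk : ∀ (f : ℝ → ℝ), IntervalIntegrable f volume 0 T →
      ∀ k < N, IntervalIntegrable f volume (a k) (a (k+1)) := by
    intro f hf k hkN
    have hk1 : (k : ℝ) + 1 ≤ (N : ℝ) := by exact_mod_cast Nat.succ_le_of_lt hkN
    apply hsubint <;> first
      | (simp only [hadef]; push_cast; nlinarith)
      | exact hf
  have ha0 : a 0 = 0 := by simp [hadef]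
  have haN : a N = (N : ℝ) * Δ := rfl
  have hsplit1 : ∑ k ∈ Finset.range N, ∫ x in (a k)..(a (k+1)), C₁ (p x + h x)
      = ∫ x in (0:ℝ)..((N:ℝ)*Δ), C₁ (p x + h x) := by
    rw [intervalIntegral.sum_integral_adjacent_intervals (fun k hkN => hintk _ hCphint k hkN),
      ha0]
  have hsplit2 : ∑ k ∈ Finset.range N, ∫ x in (a k)..(a (k+1)), C₁ (p x)
      = ∫ x in (0:ℝ)..((N:ℝ)*Δ), C₁ (p x) := by
    rw [intervalIntegral.sum_integral_adjacent_intervals (fun k hkN => hintk _ hCpint k hkN),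
      ha0]
  have hsum : (∫ x in (0:ℝ)..((N:ℝ)*Δ), C₁ (p x)) ≤
      (∫ x in (0:ℝ)..((N:ℝ)*Δ), C₁ (p x + h x)) + (N : ℝ) * ((γ₁ + γ₂) * Δ) := by
    rw [← hsplit1, ← hsplit2]
    calc ∑ k ∈ Finset.range N, ∫ x in (a k)..(a (k+1)), C₁ (p x)
        ≤ ∑ k ∈ Finset.range N,
            ((∫ x in (a k)..(a (k+1)), C₁ (p x + h x)) + (γ₁ + γ₂) * Δ) := by
          apply Finset.sum_le_sum
          intro k hkmem
          have hkN := Finset.mem_range.1 hkmem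
          have := hk k hkN
          simpa [hadef, add_mul, one_mul] using this
      _ = (∑ k ∈ Finset.range N, ∫ x in (a k)..(a (k+1)), C₁ (p x + h x))
            + (N : ℝ) * ((γ₁ + γ₂) * Δ) := by
          rw [Finset.sum_add_distrib, Finset.sum_const, Finset.card_range, nsmul_eq_mul]
  -- tails
  have hintA := hsubint 0 ((N:ℝ)*Δ) le_rfl hT.le h0N hNle
  have hintB := hsubint ((N:ℝ)*Δ) T h0N hNle hT.le le_rfl
  have hsplitT1 : (∫ x in (0:ℝ)..T, C₁ (p x + h x))
      = (∫ x in (0:ℝ)..((N:ℝ)*Δ), C₁ (p x + h x)) + ∫ x in ((N:ℝ)*Δ)..T, C₁ (p x + h x) :=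
    (intervalIntegral.integral_add_adjacent_intervals (hintA _ hCphint) (hintB _ hCphint)).symm
  have hsplitT2 : (∫ x in (0:ℝ)..T, C₁ (p x))
      = (∫ x in (0:ℝ)..((N:ℝ)*Δ), C₁ (p x)) + ∫ x in ((N:ℝ)*Δ)..T, C₁ (p x) :=
    (intervalIntegral.integral_add_adjacent_intervals (hintA _ hCpint) (hintB _ hCpint)).symm
  have htail1 : 0 ≤ ∫ x in ((N:ℝ)*Δ)..T, C₁ (p x + h x) :=
    intervalIntegral.integral_nonneg hNle (fun u _ => hC₁pos _)
  have htail2 : (∫ x in ((N:ℝ)*Δ)..T, C₁ (p x)) ≤ C₁ r * Δ := by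
    have hmono2 : (∫ x in ((N:ℝ)*Δ)..T, C₁ (p x)) ≤ ∫ _x in ((N:ℝ)*Δ)..T, C₁ r := by
      apply intervalIntegral.integral_mono_on hNle (hintB _ hCpint) intervalIntegrable_const
      intro t ht
      have htT : t ∈ Set.Icc (0:ℝ) T := ⟨le_trans h0N ht.1, ht.2⟩
      have h1 := hbd t htT
      have h2 := abs_nonneg (h t)
      exact hC₁mono (le_trans (le_abs_self _) (by linarith))
    rw [intervalIntegral.integral_const, smul_eq_mul] at hmono2
    nlinarith
  have hNT : (N : ℝ) * ((γ₁ + γ₂) * Δ) ≤ (γ₁ + γ₂) * T := by nlinarith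
  have hCr : C₁ r * Δ ≤ 2 * C₁ r * Δ := by nlinarith
  linarith
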